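/- In the ring (∧ L) ⊗ (∧ M) for free ℤ-modules L, M of rank g with bases (c_k) and (v_k), the (g−d)-th power of the element θ = Σ_{k=1}^g c_k ⊗ v_k equals (g−d)! times Σ_{I ⊆ {1,…,g}, |I| = g−d} (∧_{k∈I} c_k) ⊗ (∧_{k∈I} v_k), where the product of c_k ⊗ v_k and c_l ⊗ v_l is (c_k ∧ c_l) ⊗ (v_k ∧ v_l). -/

import Mathlib

open ExteriorAlgebra TensorProduct

/-- The wedge `∧_{k ∈ I} c k` (indices in increasing order) in the exterior algebra. -/
noncomputable def wedgeSet {g : ℕ} {L : Type*} [AddCommGroup L] [Module ℤ L]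
    (c : Fin g → L) (I : Finset (Fin g)) : ExteriorAlgebra ℤ L :=
  ((I.sort (· ≤ ·)).map fun k => ExteriorAlgebra.ι ℤ (c k)).prod

attribute [local instance 2000] Algebra.toModule

section
variable {g : ℕ} {L M : Type*} [AddCommGroup L] [Module ℤ L] [AddCommGroup M] [Module ℤ M]
  (c : Fin g → L) (v : Fin g → M)

noncomputable def TT (l : List (Fin g)) : ExteriorAlgebra ℤ L ⊗[ℤ] ExteriorAlgebra ℤ M :=
  ((l.map fun k => ExteriorAlgebra.ι ℤ (c k)).prod) ⊗ₜ[ℤ]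
    ((l.map fun k => ExteriorAlgebra.ι ℤ (v k)).prod)

noncomputable def tt (k : Fin g) : ExteriorAlgebra ℤ L ⊗[ℤ] ExteriorAlgebra ℤ M :=
  (ExteriorAlgebra.ι ℤ (c k)) ⊗ₜ[ℤ] (ExteriorAlgebra.ι ℤ (v k))

lemma TT_nil : TT c v [] = 1 := by
  simp [TT, Algebra.TensorProduct.one_def]

lemma TT_cons (k : Fin g) (l : List (Fin g)) :
    TT c v (k :: l) = tt c v k * TT c v l := by
  simp [TT, tt, Algebra.TensorProduct.tmul_mul_tmul]

lemma tt_comm (k l : Fin g) : tt c v k * tt c v l = tt c v l * tt c v k := by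
  simp only [tt, Algebra.TensorProduct.tmul_mul_tmul]
  have hc : ι ℤ (c k) * ι ℤ (c l) = -(ι ℤ (c l) * ι ℤ (c k)) := by
    rw [eq_neg_iff_add_eq_zero]; exact ι_add_mul_swap _ _
  have hv : ι ℤ (v k) * ι ℤ (v l) = -(ι ℤ (v l) * ι ℤ (v k)) := by
    rw [eq_neg_iff_add_eq_zero]; exact ι_add_mul_swap _ _
  rw [hc, hv, TensorProduct.neg_tmul, TensorProduct.tmul_neg, neg_neg]

lemma TT_perm {l l' : List (Fin g)} (h : l.Perm l') : TT c v l = TT c v l' := by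
  induction h with
  | nil => rfl
  | cons a _ ih => rw [TT_cons, TT_cons, ih]
  | swap a b l => rw [TT_cons, TT_cons, TT_cons, TT_cons, ← mul_assoc, ← mul_assoc, tt_comm]
  | trans _ _ ih1 ih2 => rw [ih1, ih2]

lemma tt_sq (k : Fin g) : tt c v k * tt c v k = 0 := by
  simp [tt, Algebra.TensorProduct.tmul_mul_tmul, ι_sq_zero]

lemma tt_mul_TT_of_mem {k : Fin g} {l : List (Fin g)} (h : k ∈ l) :
    tt c v k * TT c v l = 0 := by
  induction l with
  | nil => simp at h
  | cons a l ih =>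
    rw [TT_cons, ← mul_assoc]
    rcases List.mem_cons.mp h with rfl | h
    · rw [tt_sq, zero_mul]
    · rw [tt_comm, mul_assoc, ih h, mul_zero]

noncomputable def WW (I : Finset (Fin g)) : ExteriorAlgebra ℤ L ⊗[ℤ] ExteriorAlgebra ℤ M :=
  TT c v (I.sort (· ≤ ·))

lemma tt_mul_WW_of_mem {k : Fin g} {I : Finset (Fin g)} (h : k ∈ I) :
    tt c v k * WW c v I = 0 :=
  tt_mul_TT_of_mem c v (by simpa using h)

lemma tt_mul_WW_of_not_mem {k : Fin g} {I : Finset (Fin g)} (h : k ∉ I) :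
    tt c v k * WW c v I = WW c v (insert k I) := by
  have hperm : (insert k I).sort (· ≤ ·) |>.Perm (k :: I.sort (· ≤ ·)) := by
    refine (Finset.sort_perm_toList _ _).trans ?_
    refine (Finset.toList_insert h).trans ?_
    exact List.Perm.cons k (Finset.sort_perm_toList _ _).symm
  unfold WW
  rw [TT_perm c v hperm, TT_cons]

lemma key_count (n : ℕ) :
    ∑ I ∈ Finset.powersetCard n (Finset.univ : Finset (Fin g)),
        ∑ k ∈ Iᶜ, WW c v (insert k I)
      = ∑ J ∈ Finset.powersetCard (n+1) (Finset.univ : Finset (Fin g)),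
          ∑ k ∈ J, WW c v J := by
  rw [Finset.sum_sigma', Finset.sum_sigma']
  refine Finset.sum_nbij' (fun p => ⟨insert p.2 p.1, p.2⟩) (fun p => ⟨p.1.erase p.2, p.2⟩)
    ?_ ?_ ?_ ?_ ?_
  · rintro ⟨I, k⟩ hp
    rw [Finset.mem_sigma] at hp ⊢
    obtain ⟨hI, hk⟩ := hp
    rw [Finset.mem_powersetCard_univ] at hI
    rw [Finset.mem_compl] at hk
    exact ⟨Finset.mem_powersetCard_univ.mpr (by rw [Finset.card_insert_of_notMem hk, hI]),
      Finset.mem_insert_self _ _⟩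
  · rintro ⟨J, k⟩ hp
    rw [Finset.mem_sigma] at hp ⊢
    obtain ⟨hJ, hk⟩ := hp
    rw [Finset.mem_powersetCard_univ] at hJ
    refine ⟨Finset.mem_powersetCard_univ.mpr ?_, by simp⟩
    rw [Finset.card_erase_of_mem hk, hJ]; rfl
  · rintro ⟨I, k⟩ hp
    rw [Finset.mem_sigma] at hp
    have hk := Finset.mem_compl.mp hp.2
    simp [Finset.erase_insert hk]
  · rintro ⟨J, k⟩ hp
    rw [Finset.mem_sigma] at hp
    simp [Finset.insert_erase hp.2]
  · rintro ⟨I, k⟩ hp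
    simp

lemma main (n : ℕ) :
    (∑ k : Fin g, tt c v k) ^ n
      = (n.factorial : ℤ) •
          ∑ I ∈ Finset.powersetCard n (Finset.univ : Finset (Fin g)), WW c v I := by
  induction n with
  | zero => simp [WW, TT_nil]
  | succ n ih =>
    rw [pow_succ', ih, mul_smul_comm, Finset.mul_sum]
    have step : ∀ I ∈ Finset.powersetCard n (Finset.univ : Finset (Fin g)),
        (∑ k : Fin g, tt c v k) * WW c v I = ∑ k ∈ Iᶜ, WW c v (insert k I) := by
      intro I _
      rw [Finset.sum_mul]
      rw [← Finset.sum_add_sum_compl I (fun k => tt c v k * WW c v I)]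
      have h1 : ∑ k ∈ I, tt c v k * WW c v I = 0 :=
        Finset.sum_eq_zero fun k hk => tt_mul_WW_of_mem c v hk
      rw [h1, zero_add]
      exact Finset.sum_congr rfl fun k hk =>
        tt_mul_WW_of_not_mem c v (Finset.mem_compl.mp hk)
    rw [Finset.sum_congr rfl step, key_count]
    have h2 : ∀ J ∈ Finset.powersetCard (n+1) (Finset.univ : Finset (Fin g)),
        ∑ _k ∈ J, WW c v J = (n+1 : ℤ) • WW c v J := by
      intro J hJ
      rw [Finset.sum_const, Finset.mem_powersetCard_univ.mp hJ]
      norm_num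
    rw [Finset.sum_congr rfl h2]
    erw [← Finset.smul_sum, smul_smul]
    congr 1
    push_cast [Nat.factorial_succ]
    ring
end

/-- In the ring `(∧L) ⊗ (∧M)` (with multiplication
`(a ⊗ w)(b ⊗ x) = (a ∧ b) ⊗ (w ∧ x)`), the `(g−d)`-th power of
`θ = Σ_k c_k ⊗ v_k` equals `(g−d)!` times `Σ_{|I| = g−d} (∧_{k∈I} c_k) ⊗ (∧_{k∈I} v_k)`. -/
theorem theta_power_expansion
    (g d : ℕ) (hd : d ≤ g)
    (L M : Type*) [AddCommGroup L] [Module ℤ L] [AddCommGroup M] [Module ℤ M]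
    (c : Module.Basis (Fin g) ℤ L) (v : Module.Basis (Fin g) ℤ M) :
    (∑ k : Fin g, (ExteriorAlgebra.ι ℤ (c k)) ⊗ₜ[ℤ] (ExteriorAlgebra.ι ℤ (v k)))
        ^ (g - d)
      = ((g - d).factorial : ℤ) •
          ∑ I ∈ Finset.powersetCard (g - d) (Finset.univ : Finset (Fin g)),
            wedgeSet c I ⊗ₜ[ℤ] wedgeSet v I := by
  have h := main (fun k => c k) (fun k => v k) (g - d)
  simpa only [tt, WW, TT, wedgeSet] using h
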